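/- Every empirical game (N players with arbitrary strategy spaces of functions, uniform distribution over a finite sample, payoffs w_i as defined via the satisfaction indicator) possesses at least one pure Nash equilibrium, provided the set of distinct payoff-relevant behaviors on the sample is finite (e.g., when each restricted indicator class is finite). -/

import Mathlib

open Classical in
noncomputable def satInd {X : Type*} (g : X → ℝ) (z : X × ℝ × ℝ) : ℝ :=
  if |g z.1 - z.2.1| ≤ z.2.2 then 1 else 0

noncomputable def nSat {X : Type*} {ι : Type*} [Fintype ι]
    (h : ι → X → ℝ) (z : X × ℝ × ℝ) : ℝ :=
  ∑ i, satInd (h i) z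

open Classical in
noncomputable def share {X : Type*} {ι : Type*} [Fintype ι]
    (h : ι → X → ℝ) (i : ι) (z : X × ℝ × ℝ) : ℝ :=
  if nSat h z = 0 then 0 else satInd (h i) z / nSat h z

noncomputable def empPayoff {X : Type*} {ι : Type*} [Fintype ι] {m : ℕ}
    (z : Fin m → X × ℝ × ℝ) (i : ι) (h : ι → X → ℝ) : ℝ :=
  (1 / m) * ∑ j, share h i (z j)

noncomputable def harm (n : ℕ) : ℝ := ∑ k ∈ Finset.range n, 1 / (k + 1)

lemma harm_succ (n : ℕ) : harm (n + 1) = harm n + 1 / (n + 1) := by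
  simp [harm, Finset.sum_range_succ]

lemma satInd_cases {X : Type*} (g : X → ℝ) (z : X × ℝ × ℝ) :
    satInd g z = 0 ∨ satInd g z = 1 := by
  unfold satInd; split <;> simp

/-- Every empirical game possesses a pure Nash equilibrium, provided for each
player the set of distinct indicator behaviors of her strategies on the sample
is finite. -/
theorem stmt_9 {X : Type*} {ι : Type*} [Fintype ι] [DecidableEq ι] {m : ℕ}
    (z : Fin m → X × ℝ × ℝ) (ht : ∀ j, 0 ≤ (z j).2.2)
    (H : ι → Set (X → ℝ)) (hne : ∀ i, (H i).Nonempty)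
    (hfin : ∀ i, (Set.image (fun g : X → ℝ => fun j : Fin m => satInd g (z j))
      (H i)).Finite) :
    ∃ h : ι → X → ℝ, (∀ i, h i ∈ H i) ∧
      ∀ (i : ι), ∀ g ∈ H i, empPayoff z i (Function.update h i g) ≤ empPayoff z i h := by
  classical
  set ind : (X → ℝ) → Fin m → ℝ := fun g j => satInd g (z j) with hind
  set S : ι → Set (Fin m → ℝ) := fun i => ind '' H i with hS
  have hSfin : ∀ i, (S i).Finite := hfin
  have hSne : ∀ i, (S i).Nonempty := fun i => (hne i).image _
  set T : Set (ι → Fin m → ℝ) := Set.pi Set.univ S with hT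
  have hTfin : T.Finite := Set.Finite.pi hSfin
  have hTne : T.Nonempty := Set.univ_pi_nonempty_iff.mpr hSne
  -- counts
  set cnt : (ι → Fin m → ℝ) → Fin m → ℕ :=
    fun v j => (Finset.univ.filter (fun i => v i j = 1)).card with hcnt
  set cntE : (ι → Fin m → ℝ) → ι → Fin m → ℕ :=
    fun v i j => ((Finset.univ.erase i).filter (fun i' => v i' j = 1)).card with hcntE
  set Φ : (ι → Fin m → ℝ) → ℝ := fun v => ∑ j, harm (cnt v j) with hΦ
  set Ψ : ι → (ι → Fin m → ℝ) → ℝ := fun i v => ∑ j, harm (cntE v i j) with hΨ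
  -- key pointwise identity
  have key : ∀ (h' : ι → X → ℝ) (i : ι) (j : Fin m),
      share h' i (z j)
        = harm (cnt (fun i' => ind (h' i')) j) - harm (cntE (fun i' => ind (h' i')) i j) := by
    intro h' i j
    set v : ι → Fin m → ℝ := fun i' => ind (h' i') with hv
    have hsplit : cnt v j = cntE v i j + (if v i j = 1 then 1 else 0) := by
      simp only [hcnt, hcntE, Finset.card_filter]
      rw [← Finset.sum_erase_add _ _ (Finset.mem_univ i)]
    have hns : nSat h' (z j) = (cnt v j : ℝ) := by
      simp only [nSat, hcnt, Finset.card_filter]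
      push_cast
      refine Finset.sum_congr rfl fun i' _ => ?_
      rcases satInd_cases (h' i') (z j) with h0 | h1
      · simp [hv, hind, h0]
      · simp [hv, hind, h1]
    rcases satInd_cases (h' i) (z j) with h0 | h1
    · have hvij : v i j = 0 := h0
      have : cnt v j = cntE v i j := by
        rw [hsplit, if_neg (by rw [hvij]; norm_num)]; omega
      rw [this]
      simp only [share, h0, sub_self]
      split <;> simp
    · have hvij : v i j = 1 := h1
      have hc : cnt v j = cntE v i j + 1 := by rw [hsplit, if_pos hvij]
      have hne0 : nSat h' (z j) ≠ 0 := by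
        rw [hns, hc]; push_cast; positivity
      rw [share, if_neg hne0, h1, hns, hc, harm_succ]
      push_cast
      ring
  -- payoff as potential difference
  have payoff_eq : ∀ (h' : ι → X → ℝ) (i : ι),
      empPayoff z i h' = (1 / m) * (Φ (fun i' => ind (h' i')) - Ψ i (fun i' => ind (h' i'))) := by
    intro h' i
    rw [empPayoff]
    congr 1
    rw [hΦ, hΨ, ← Finset.sum_sub_distrib]
    exact Finset.sum_congr rfl fun j _ => key h' i j
  -- maximize Φ on T
  obtain ⟨v, hvT', hvmax'⟩ := hTfin.toFinset.exists_max_image Φ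
    (by rwa [Set.Finite.toFinset_nonempty])
  have hvT : v ∈ T := hTfin.mem_toFinset.mp hvT'
  have hvmax : ∀ w ∈ T, Φ w ≤ Φ v := fun w hw => hvmax' w (hTfin.mem_toFinset.mpr hw)
  have hchoice : ∀ i, ∃ g, g ∈ H i ∧ ind g = v i := by
    intro i
    obtain ⟨g, hg, hgeq⟩ := hvT i (Set.mem_univ i)
    exact ⟨g, hg, hgeq⟩
  choose h hhH hhv using hchoice
  have hvecs : (fun i' => ind (h i')) = v := funext hhv
  refine ⟨h, hhH, fun i g hg => ?_⟩
  set w : Fin m → ℝ := ind g with hw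
  set v' : ι → Fin m → ℝ := Function.update v i w with hv'
  have hvecs' : (fun i' => ind ((Function.update h i g) i')) = v' := by
    funext i'
    by_cases hii : i' = i
    · subst hii; simp [hv', Function.update_self, hw]
    · simp [hv', Function.update_of_ne hii, hhv]
  have hv'T : v' ∈ T := by
    intro i' _
    by_cases hii : i' = i
    · subst hii; simp only [hv', Function.update_self]; exact ⟨g, hg, rfl⟩
    · rw [hv', Function.update_of_ne hii]; exact hvT i' (Set.mem_univ i')
  have hΨeq : Ψ i v' = Ψ i v := by
    refine Finset.sum_congr rfl fun j _ => ?_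
    have hfe : ((Finset.univ.erase i).filter (fun i' => v' i' j = 1))
        = ((Finset.univ.erase i).filter (fun i' => v i' j = 1)) := by
      refine Finset.filter_congr fun i' hi' => ?_
      rw [hv', Function.update_of_ne (Finset.ne_of_mem_erase hi')]
    simp only [hcntE, hfe]
  rw [payoff_eq, payoff_eq, hvecs, hvecs', hΨeq]
  have hm : (0 : ℝ) ≤ 1 / m := by positivity
  exact mul_le_mul_of_nonneg_left (sub_le_sub_right (hvmax v' hv'T) _) hm
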